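/- Let λ = (3 − √5)/2, so that λ ∈ (0,1) and λ + 1/λ = 3. Let n ≥ 1 and let x₀, x₁, …, x_n be nonnegative real numbers satisfying x_j ≤ (1/3)(x_{j−1} + x_{j+1}) for all 1 ≤ j ≤ n−1. Then for every 0 ≤ j ≤ n, x_j ≤ (x₀ + x_n) · (λ^j + λ^{n−j}). -/
import Mathlib


/-- Discrete three-term comparison lemma with `λ = (3 − √5)/2`. -/
theorem stmt9 (l : ℝ) (hl : l = (3 - Real.sqrt 5) / 2) :
    (0 < l ∧ l < 1 ∧ l + 1 / l = 3) ∧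
    ∀ (n : ℕ), 1 ≤ n → ∀ x : ℕ → ℝ,
      (∀ j ≤ n, 0 ≤ x j) →
      (∀ j, 1 ≤ j → j + 1 ≤ n → x j ≤ (1 / 3) * (x (j - 1) + x (j + 1))) →
      ∀ j ≤ n, x j ≤ (x 0 + x n) * (l ^ j + l ^ (n - j)) := by
  have h5 : Real.sqrt 5 * Real.sqrt 5 = 5 := Real.mul_self_sqrt (by norm_num)
  have h5nn : (0:ℝ) ≤ Real.sqrt 5 := Real.sqrt_nonneg 5
  have hlpos : 0 < l := by rw [hl]; nlinarith
  have hl1 : l < 1 := by rw [hl]; nlinarith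
  have hkey : l * l + 1 = 3 * l := by rw [hl]; nlinarith
  have hpow : ∀ m : ℕ, l ^ m + l ^ (m + 2) = 3 * l ^ (m + 1) := by
    intro m
    have h1 : l ^ m + l ^ (m+2) = l ^ m * (l * l + 1) := by ring
    rw [h1, hkey]; ring
  refine ⟨⟨hlpos, hl1, ?_⟩, ?_⟩
  · field_simp
    linarith [hkey]
  intro n hn x hx hrec
  have hc0 : 0 ≤ x 0 + x n := add_nonneg (hx 0 (Nat.zero_le n)) (hx n le_rfl)
  set f : ℕ → ℝ := fun j => (x 0 + x n) * (l ^ j + l ^ (n - j)) - x j with hf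
  have hln : 0 ≤ l ^ n := pow_nonneg hlpos.le n
  have hf0 : 0 ≤ f 0 := by
    have h : f 0 = (x 0 + x n) * (1 + l ^ n) - x 0 := by simp [hf]
    rw [h]
    nlinarith [hx n le_rfl, hx 0 (Nat.zero_le n)]
  have hfn : 0 ≤ f n := by
    have h : f n = (x 0 + x n) * (l ^ n + 1) - x n := by simp [hf]
    rw [h]
    nlinarith [hx 0 (Nat.zero_le n)]
  obtain ⟨j0, hj0mem, hmin⟩ :=
    Finset.exists_min_image (Finset.range (n+1)) f ⟨0, by simp⟩
  have hj0 : j0 ≤ n := by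
    have := Finset.mem_range.mp hj0mem; omega
  have hfj0 : 0 ≤ f j0 := by
    rcases eq_or_ne j0 0 with h0 | h0
    · rw [h0]; exact hf0
    rcases eq_or_ne j0 n with hN | hN
    · rw [hN]; exact hfn
    · obtain ⟨a, b, ha, hb⟩ : ∃ a b, j0 = a + 1 ∧ n = a + b + 2 :=
        ⟨j0 - 1, n - j0 - 1, by omega, by omega⟩
      subst ha
      subst hb
      have hrec' := hrec (a+1) (by omega) (by omega)
      have e0 : a + 1 - 1 = a := by omega
      rw [e0] at hrec'
      have e1 : a + b + 2 - a = b + 2 := by omega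
      have e2 : a + b + 2 - (a+1) = b + 1 := by omega
      have e3 : a + b + 2 - (a+2) = b := by omega
      have hya : f a = (x 0 + x (a+b+2)) * (l ^ a + l ^ (b+2)) - x a := by
        simp only [hf, e1]
      have hyb : f (a+2) = (x 0 + x (a+b+2)) * (l ^ (a+2) + l ^ b) - x (a+2) := by
        simp only [hf, e3]
      have hyj : f (a+1) = (x 0 + x (a+b+2)) * (l ^ (a+1) + l ^ (b+1)) - x (a+1) := by
        simp only [hf, e2]
      have hma : f (a+1) ≤ f a := hmin a (by simp only [Finset.mem_range]; omega)
      have hmb : f (a+1) ≤ f (a+2) := hmin (a+2) (by simp only [Finset.mem_range]; omega)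
      have hp1 := hpow a
      have hp2 := hpow b
      have hCeq : (x 0 + x (a+b+2)) * (l ^ a + l ^ (b+2))
          + (x 0 + x (a+b+2)) * (l ^ (a+2) + l ^ b)
          = 3 * ((x 0 + x (a+b+2)) * (l ^ (a+1) + l ^ (b+1))) := by
        have hsum : l ^ a + l ^ (b+2) + (l ^ (a+2) + l ^ b)
            = 3 * (l ^ (a+1) + l ^ (b+1)) := by linarith
        calc (x 0 + x (a+b+2)) * (l ^ a + l ^ (b+2))
              + (x 0 + x (a+b+2)) * (l ^ (a+2) + l ^ b)
            = (x 0 + x (a+b+2)) * (l ^ a + l ^ (b+2) + (l ^ (a+2) + l ^ b)) := by ring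
          _ = 3 * ((x 0 + x (a+b+2)) * (l ^ (a+1) + l ^ (b+1))) := by rw [hsum]; ring
      linarith [hma, hmb, hrec', hCeq]
  intro j hj
  have hfj : 0 ≤ f j :=
    le_trans hfj0 (hmin j (by simp only [Finset.mem_range]; omega))
  simp only [hf] at hfj
  linarith
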